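/- Consider the ODE θ'(t) = S̄ · ((θ₂ − θ(t))/(θ₂ − θ₁))^γ with γ > 1, S̄ > 0, and initial data θ(0) = θ₀ ∈ (θ₁, θ₂). Then the unique solution satisfies θ(t) < θ₂ for all t ≥ 0, θ is strictly increasing, and θ(t) → θ₂ as t → ∞ (the temperature flattens toward but never reaches θ_vap₂ in finite time). -/

import Mathlib

open Real Set Filter Topology

theorem stmt_17 (θ₁ θ₂ γ S θ₀ : ℝ) (hθ : θ₁ < θ₂) (hγ : 1 < γ) (hS : 0 < S)
    (hθ₀ : θ₀ ∈ Set.Ioo θ₁ θ₂) (θ : ℝ → ℝ) (h0 : θ 0 = θ₀)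
    (hode : ∀ t ≥ (0:ℝ), HasDerivAt θ (S * ((θ₂ - θ t) / (θ₂ - θ₁)) ^ γ) t) :
    (∀ t ≥ (0:ℝ), θ t < θ₂) ∧ StrictMonoOn θ (Set.Ici 0) ∧
      Filter.Tendsto θ Filter.atTop (nhds θ₂) := by
  obtain ⟨hθ₀1, hθ₀2⟩ := hθ₀
  have hcpos : (0:ℝ) < θ₂ - θ₁ := sub_pos.2 hθ
  have hγ1 : (0:ℝ) < γ - 1 := by linarith
  -- Part 1 : θ t < θ₂ for all t ≥ 0
  have part1 : ∀ t ≥ (0:ℝ), θ t < θ₂ := by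
    by_contra hcon
    push_neg at hcon
    obtain ⟨t₀, ht₀, ht₀'⟩ := hcon
    set A : Set ℝ := {t | 0 ≤ t ∧ θ₂ ≤ θ t} with hA
    have hAne : A.Nonempty := ⟨t₀, ht₀, ht₀'⟩
    have hAbdd : BddBelow A := ⟨0, fun x hx => hx.1⟩
    have hAclosed : IsClosed A := by
      have hAeq : A = Ici (0:ℝ) ∩ θ ⁻¹' (Ici θ₂) := by
        ext x; simp [hA, Set.mem_setOf_eq]
      rw [hAeq]
      exact ContinuousOn.preimage_isClosed_of_isClosed
        (fun t ht => ((hode t ht).continuousAt).continuousWithinAt) isClosed_Ici isClosed_Ici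
    set T := sInf A with hT
    have hTA : T ∈ A := hAclosed.csInf_mem hAne hAbdd
    have hT0 : 0 ≤ T := hTA.1
    have hTpos : 0 < T := by
      rcases hT0.lt_or_eq with h | h
      · exact h
      · exfalso; have h2 := hTA.2; rw [← h, h0] at h2; linarith
    have hlt : ∀ t ∈ Ico (0:ℝ) T, θ t < θ₂ := by
      intro t ht
      by_contra hc
      push_neg at hc
      exact absurd (csInf_le hAbdd ⟨ht.1, hc⟩) (not_le.2 ht.2)
    set K := S * (γ - 1) / (θ₂ - θ₁) ^ γ with hK
    have hKpos : 0 < K := div_pos (mul_pos hS hγ1) (rpow_pos_of_pos hcpos γ)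
    -- derivative of (θ₂ - θ)^(1-γ) - K t is zero on [0,T)
    have hderiv : ∀ t ∈ Ico (0:ℝ) T,
        HasDerivAt (fun s => (θ₂ - θ s) ^ (1 - γ) - K * s) 0 t := by
      intro t ht
      have hu : 0 < θ₂ - θ t := sub_pos.2 (hlt t ht)
      have hg : HasDerivAt (fun s => θ₂ - θ s)
          (-(S * ((θ₂ - θ t) / (θ₂ - θ₁)) ^ γ)) t := by
        exact ((hasDerivAt_const t θ₂).sub (hode t ht.1)).congr_deriv (by simp)
      have h1 : HasDerivAt (fun s => (θ₂ - θ s) ^ (1 - γ))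
          (-(S * ((θ₂ - θ t) / (θ₂ - θ₁)) ^ γ) * (1 - γ) * (θ₂ - θ t) ^ (1 - γ - 1)) t :=
        hg.rpow_const (Or.inl hu.ne')
      have key : -(S * ((θ₂ - θ t) / (θ₂ - θ₁)) ^ γ) * (1 - γ) * (θ₂ - θ t) ^ (1 - γ - 1)
          = K := by
        have e1 : ((θ₂ - θ t) / (θ₂ - θ₁)) ^ γ = (θ₂ - θ t) ^ γ / (θ₂ - θ₁) ^ γ :=
          Real.div_rpow hu.le hcpos.le γ
        have e2 : (θ₂ - θ t) ^ γ * (θ₂ - θ t) ^ (1 - γ - 1) = 1 := by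
          rw [← Real.rpow_add hu]; norm_num
        calc -(S * ((θ₂ - θ t) / (θ₂ - θ₁)) ^ γ) * (1 - γ) * (θ₂ - θ t) ^ (1 - γ - 1)
            = S * (γ - 1) / (θ₂ - θ₁) ^ γ
                * ((θ₂ - θ t) ^ γ * (θ₂ - θ t) ^ (1 - γ - 1)) := by rw [e1]; ring
          _ = K := by rw [e2, mul_one]
        
      have h2 : HasDerivAt (fun s => (θ₂ - θ s) ^ (1 - γ)) K t := key ▸ h1
      have h3 : HasDerivAt (fun s => K * s) K t := by
        simpa using (hasDerivAt_id t).const_mul K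
      exact (h2.sub h3).congr_deriv (by simp)
    set B := (θ₂ - θ₀) ^ (1 - γ) + K * T with hB
    have hBpos : 0 < B :=
      add_pos (rpow_pos_of_pos (by linarith) _) (mul_pos hKpos hTpos)
    have hbound : ∀ s ∈ Ico (0:ℝ) T, (θ₂ - θ s) ^ (1 - γ) ≤ B := by
      intro s hs
      have hsub : Icc (0:ℝ) s ⊆ Ico (0:ℝ) T := fun x hx => ⟨hx.1, lt_of_le_of_lt hx.2 hs.2⟩
      have hanti : AntitoneOn (fun s => (θ₂ - θ s) ^ (1 - γ) - K * s) (Icc 0 s) := by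
        apply antitoneOn_of_deriv_nonpos (convex_Icc 0 s)
        · exact fun x hx => ((hderiv x (hsub hx)).continuousAt).continuousWithinAt
        · intro x hx
          rw [interior_Icc] at hx
          exact ((hderiv x (hsub (Ioo_subset_Icc_self hx))).differentiableAt).differentiableWithinAt
        · intro x hx
          rw [interior_Icc] at hx
          rw [(hderiv x (hsub (Ioo_subset_Icc_self hx))).deriv]
      have h4 := hanti (left_mem_Icc.2 hs.1) (right_mem_Icc.2 hs.1) hs.1
      simp only [h0, mul_zero, sub_zero] at h4
      have : K * s ≤ K * T := mul_le_mul_of_nonneg_left hs.2.le hKpos.le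
      rw [hB]; linarith
    set e := (1 - γ)⁻¹ with he
    have hene : (1 - γ) ≠ 0 := by intro h; rw [sub_eq_zero] at h; linarith
    have heneg : e ≤ 0 := le_of_lt (inv_neg''.2 (by linarith))
    set δ := B ^ e with hδ
    have hδpos : 0 < δ := rpow_pos_of_pos hBpos e
    have hδle : ∀ s ∈ Ico (0:ℝ) T, δ ≤ θ₂ - θ s := by
      intro s hs
      have hu : 0 < θ₂ - θ s := sub_pos.2 (hlt s hs)
      have h5 : B ^ e ≤ ((θ₂ - θ s) ^ (1 - γ)) ^ e :=
        Real.rpow_le_rpow_of_nonpos (rpow_pos_of_pos hu _) (hbound s hs) heneg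
      have h6 : ((θ₂ - θ s) ^ (1 - γ)) ^ e = θ₂ - θ s := by
        rw [← Real.rpow_mul hu.le, mul_inv_cancel₀ hene, Real.rpow_one]
      rwa [h6] at h5
    have htend : Tendsto (fun s => θ₂ - θ s) (𝓝[<] T) (𝓝 (θ₂ - θ T)) :=
      ((continuousAt_const.sub (hode T hT0).continuousAt).continuousWithinAt).tendsto
    have hev : ∀ᶠ s in 𝓝[<] T, δ ≤ θ₂ - θ s := by
      filter_upwards [Ioo_mem_nhdsLT_of_mem (Set.mem_Ioc.2 ⟨hTpos, le_refl T⟩)] with s hs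
      exact hδle s ⟨hs.1.le, hs.2⟩
    have hfin : δ ≤ θ₂ - θ T := ge_of_tendsto htend hev
    have := hTA.2
    linarith
  -- continuity on Ici 0
  have hcont : ContinuousOn θ (Ici 0) :=
    fun t ht => ((hode t ht).continuousAt).continuousWithinAt
  -- Part 2 : strict monotonicity
  have part2 : StrictMonoOn θ (Ici 0) := by
    apply strictMonoOn_of_deriv_pos (convex_Ici 0) hcont
    intro t ht
    rw [interior_Ici] at ht
    rw [(hode t ht.le).deriv]
    exact mul_pos hS (rpow_pos_of_pos (div_pos (sub_pos.2 (part1 t ht.le)) hcpos) γ)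
  refine ⟨part1, part2, ?_⟩
  -- Part 3 : limit
  rw [tendsto_order]
  constructor
  · intro b hb
    have hex : ∃ t ≥ (0:ℝ), b < θ t := by
      by_contra hc
      push_neg at hc
      set m := S * ((θ₂ - b) / (θ₂ - θ₁)) ^ γ with hm
      have hmpos : 0 < m := mul_pos hS (rpow_pos_of_pos (div_pos (sub_pos.2 hb) hcpos) γ)
      have hmono : MonotoneOn (fun t => θ t - m * t) (Ici 0) := by
        apply monotoneOn_of_deriv_nonneg (convex_Ici 0)
        · exact hcont.sub ((continuous_const.mul continuous_id).continuousOn)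
        · intro t ht
          rw [interior_Ici] at ht
          exact ((hode t ht.le).sub (by simpa using (hasDerivAt_id t).const_mul m)
            ).differentiableAt.differentiableWithinAt
        · intro t ht
          rw [interior_Ici] at ht
          have hd : HasDerivAt (fun t => θ t - m * t)
              (S * ((θ₂ - θ t) / (θ₂ - θ₁)) ^ γ - m) t :=
            (hode t ht.le).sub (by simpa using (hasDerivAt_id t).const_mul m)
          rw [hd.deriv]
          have hle : m ≤ S * ((θ₂ - θ t) / (θ₂ - θ₁)) ^ γ := by
            apply mul_le_mul_of_nonneg_left _ hS.le
            apply Real.rpow_le_rpow (div_pos (sub_pos.2 hb) hcpos).le ?_ (by linarith)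
            gcongr
            exact hc t ht.le
          linarith
        
      set t1 := (θ₂ - θ₀) / m with ht1
      have ht1pos : 0 < t1 := div_pos (by linarith) hmpos
      have h7 := hmono (self_mem_Ici) (mem_Ici.2 ht1pos.le) ht1pos.le
      simp only [h0, mul_zero, sub_zero] at h7
      have h8 : m * t1 = θ₂ - θ₀ := by
        rw [ht1]; field_simp
      have h9 := part1 t1 ht1pos.le
      linarith
    obtain ⟨T', hT', hbT'⟩ := hex
    filter_upwards [eventually_ge_atTop T'] with t ht
    rcases eq_or_lt_of_le ht with h | h
    · rwa [← h]
    · exact hbT'.trans_le ((part2.monotoneOn) (mem_Ici.2 hT') (mem_Ici.2 (hT'.trans ht)) ht)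
  · intro b hb
    filter_upwards [eventually_ge_atTop (0:ℝ)] with t ht
    exact (part1 t ht).trans hb
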